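/- Let $c_*, T, \gamma, \alpha > 0$ and suppose $\int_0^T A^2(t)\,dt \leq \frac{c_*}{4} T$, $\int_0^T G^2(t)\,dt \leq \alpha \gamma$, and $\alpha \exp\left(\frac{c_*}{4}T\right) + \exp\left(-\frac{c_*}{4}T\right) \leq 1$. If $X : [0,T] \to [0,\infty)$ is differentiable with $X^2(0) \leq \gamma$ and satisfies $\frac{d}{dt}X^2 + \frac{c_*}{2}X^2 \leq A^2(t) X^2 + G^2(t)$ on $[0,T]$, then $X^2(T) \leq \gamma$. -/
import Mathlib

open Set intervalIntegral MeasureTheory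

theorem stmt_14 (cstar T γ α : ℝ) (hc : 0 < cstar) (hT : 0 < T) (hγ : 0 < γ) (hα : 0 < α)
    (X X' A2 G2 : ℝ → ℝ)
    (hX : ∀ t ∈ Set.Icc (0 : ℝ) T,
      HasDerivWithinAt (fun s => X s ^ 2) (X' t) (Set.Icc (0 : ℝ) T) t)
    (hXnn : ∀ t ∈ Set.Icc (0 : ℝ) T, 0 ≤ X t)
    (hA2cont : ContinuousOn A2 (Set.Icc (0 : ℝ) T))
    (hA2nn : ∀ t ∈ Set.Icc (0 : ℝ) T, 0 ≤ A2 t)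
    (hG2cont : ContinuousOn G2 (Set.Icc (0 : ℝ) T))
    (hG2nn : ∀ t ∈ Set.Icc (0 : ℝ) T, 0 ≤ G2 t)
    (hA2int : ∫ t in (0:ℝ)..T, A2 t ≤ cstar / 4 * T)
    (hG2int : ∫ t in (0:ℝ)..T, G2 t ≤ α * γ)
    (hsmall : α * Real.exp (cstar / 4 * T) + Real.exp (-(cstar / 4) * T) ≤ 1)
    (hinit : X 0 ^ 2 ≤ γ)
    (hineq : ∀ t ∈ Set.Icc (0 : ℝ) T, X' t + cstar / 2 * X t ^ 2 ≤ A2 t * X t ^ 2 + G2 t) :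
    X T ^ 2 ≤ γ := by
  have h0mem : (0:ℝ) ∈ Icc (0:ℝ) T := ⟨le_rfl, hT.le⟩
  have hTmem : T ∈ Icc (0:ℝ) T := ⟨hT.le, le_rfl⟩
  set a : ℝ → ℝ := fun t => A2 t - cstar / 2 with ha
  have hacont : ContinuousOn a (Icc (0:ℝ) T) := hA2cont.sub continuousOn_const
  have hsub : ∀ t ∈ Icc (0:ℝ) T, uIcc (0:ℝ) t ⊆ Icc (0:ℝ) T := by
    intro t ht
    rw [uIcc_of_le ht.1]
    exact Icc_subset_Icc le_rfl ht.2
  have haint : ∀ t ∈ Icc (0:ℝ) T, IntervalIntegrable a volume 0 t := fun t ht =>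
    (hacont.mono (hsub t ht)).intervalIntegrable
  set B : ℝ → ℝ := fun t => ∫ s in (0:ℝ)..t, a s with hB
  have hBcont : ContinuousOn B (Icc (0:ℝ) T) := by
    have h1 : IntegrableOn a (uIcc (0:ℝ) T) volume := by
      rw [uIcc_of_le hT.le]
      exact hacont.integrableOn_Icc
    have := intervalIntegral.continuousOn_primitive_interval h1
    rwa [uIcc_of_le hT.le] at this
  set E : ℝ → ℝ := fun t => Real.exp (-B t) with hE
  have hEcont : ContinuousOn E (Icc (0:ℝ) T) :=
    Real.continuous_exp.comp_continuousOn hBcont.neg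
  set g : ℝ → ℝ := fun t => G2 t * E t with hg
  have hgcont : ContinuousOn g (Icc (0:ℝ) T) := hG2cont.mul hEcont
  have hgint : ∀ t ∈ Icc (0:ℝ) T, IntervalIntegrable g volume 0 t := fun t ht =>
    (hgcont.mono (hsub t ht)).intervalIntegrable
  set P : ℝ → ℝ := fun t => ∫ s in (0:ℝ)..t, g s with hP
  have hPcont : ContinuousOn P (Icc (0:ℝ) T) := by
    have h1 : IntegrableOn g (uIcc (0:ℝ) T) volume := by
      rw [uIcc_of_le hT.le]
      exact hgcont.integrableOn_Icc
    have := intervalIntegral.continuousOn_primitive_interval h1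
    rwa [uIcc_of_le hT.le] at this
  set F : ℝ → ℝ := fun t => X t ^ 2 * E t with hF
  have hX2cont : ContinuousOn (fun s => X s ^ 2) (Icc (0:ℝ) T) := fun t ht =>
    (hX t ht).continuousWithinAt
  have hFcont : ContinuousOn F (Icc (0:ℝ) T) := hX2cont.mul hEcont
  set h : ℝ → ℝ := fun t => P t - F t with hh
  have hhcont : ContinuousOn h (Icc (0:ℝ) T) := hPcont.sub hFcont
  -- derivative at interior points
  have hkey : ∀ t ∈ Ioo (0:ℝ) T,
      HasDerivAt h (g t - (X' t * E t + X t ^ 2 * (E t * -(a t)))) t := by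
    intro t ht
    have htmem : t ∈ Icc (0:ℝ) T := ⟨ht.1.le, ht.2.le⟩
    have hnhds : Icc (0:ℝ) T ∈ nhds t := Icc_mem_nhds ht.1 ht.2
    have hX2at : HasDerivAt (fun s => X s ^ 2) (X' t) t :=
      (hX t htmem).hasDerivAt hnhds
    have hmeasA : StronglyMeasurableAtFilter a (nhds t) volume :=
      ContinuousOn.stronglyMeasurableAtFilter isOpen_Ioo
        (hacont.mono Ioo_subset_Icc_self) t ht
    have haat : ContinuousAt a t := (hacont t htmem).continuousAt hnhds
    have hBat : HasDerivAt B (a t) t :=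
      intervalIntegral.integral_hasDerivAt_right (haint t htmem) hmeasA haat
    have hEat : HasDerivAt E (Real.exp (-B t) * -(a t)) t := hBat.neg.exp
    have hEat' : HasDerivAt E (E t * -(a t)) t := hEat
    have hFat : HasDerivAt F (X' t * E t + X t ^ 2 * (E t * -(a t))) t :=
      hX2at.mul hEat'
    have hmeasg : StronglyMeasurableAtFilter g (nhds t) volume :=
      ContinuousOn.stronglyMeasurableAtFilter isOpen_Ioo
        (hgcont.mono Ioo_subset_Icc_self) t ht
    have hgat : ContinuousAt g t := (hgcont t htmem).continuousAt hnhds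
    have hPat : HasDerivAt P (g t) t :=
      intervalIntegral.integral_hasDerivAt_right (hgint t htmem) hmeasg hgat
    exact hPat.sub hFat
  have hmono : MonotoneOn h (Icc (0:ℝ) T) := by
    apply monotoneOn_of_deriv_nonneg (convex_Icc 0 T) hhcont
    · intro t ht
      rw [interior_Icc] at ht
      exact (hkey t ht).differentiableAt.differentiableWithinAt
    · intro t ht
      rw [interior_Icc] at ht
      rw [(hkey t ht).deriv]
      have htmem : t ∈ Icc (0:ℝ) T := ⟨ht.1.le, ht.2.le⟩
      have hEpos : 0 < E t := Real.exp_pos _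
      have hiq := hineq t htmem
      have : X' t ≤ a t * X t ^ 2 + G2 t := by
        simp only [ha]
        nlinarith
      have hgE : g t = G2 t * E t := rfl
      nlinarith
  have hmain : h 0 ≤ h T := hmono h0mem hTmem hT.le
  have hB0 : B 0 = 0 := intervalIntegral.integral_same
  have hP0 : P 0 = 0 := intervalIntegral.integral_same
  have hFT : F T ≤ X 0 ^ 2 + P T := by
    have hh0 : h 0 = -(X 0 ^ 2) := by
      simp only [hh, hF, hE, hP0, hB0, neg_zero, Real.exp_zero, mul_one, zero_sub]
    have hhT : h T = P T - F T := rfl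
    linarith [hmain, hh0.symm ▸ hmain]
  -- bound B T
  have hconstint : ∀ t : ℝ, IntervalIntegrable (fun _ : ℝ => cstar / 2) volume 0 t :=
    fun t => intervalIntegrable_const
  have hA2intble : ∀ t ∈ Icc (0:ℝ) T, IntervalIntegrable A2 volume 0 t := fun t ht =>
    (hA2cont.mono (hsub t ht)).intervalIntegrable
  have hBval : ∀ t ∈ Icc (0:ℝ) T, B t = (∫ s in (0:ℝ)..t, A2 s) - cstar / 2 * t := by
    intro t ht
    simp only [hB, ha]
    rw [intervalIntegral.integral_sub (hA2intble t ht) (hconstint t),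
      intervalIntegral.integral_const]
    simp [smul_eq_mul]
    ring
  have hBT : B T ≤ -(cstar / 4) * T := by
    rw [hBval T hTmem]
    nlinarith
  -- bound -B t ≤ cstar/2 * T on Icc
  have hnegB : ∀ t ∈ Icc (0:ℝ) T, -B t ≤ cstar / 2 * T := by
    intro t ht
    rw [hBval t ht]
    have hAnn : 0 ≤ ∫ s in (0:ℝ)..t, A2 s := by
      apply intervalIntegral.integral_nonneg ht.1
      intro u hu
      exact hA2nn u ⟨hu.1, hu.2.trans ht.2⟩
    have : cstar / 2 * t ≤ cstar / 2 * T := by nlinarith [ht.2]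
    linarith
  -- bound P T
  have hPT : P T ≤ α * γ * Real.exp (cstar / 2 * T) := by
    have hmonoInt : P T ≤ ∫ s in (0:ℝ)..T, G2 s * Real.exp (cstar / 2 * T) := by
      apply intervalIntegral.integral_mono_on hT.le (hgint T hTmem)
        ((hG2cont.mul continuousOn_const).mono (hsub T hTmem)).intervalIntegrable
      intro t ht
      have hEle : E t ≤ Real.exp (cstar / 2 * T) := Real.exp_le_exp.2 (hnegB t ht)
      exact mul_le_mul_of_nonneg_left hEle (hG2nn t ht)
    rw [intervalIntegral.integral_mul_const] at hmonoInt
    calc P T ≤ (∫ s in (0:ℝ)..T, G2 s) * Real.exp (cstar / 2 * T) := hmonoInt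
      _ ≤ α * γ * Real.exp (cstar / 2 * T) :=
        mul_le_mul_of_nonneg_right hG2int (Real.exp_pos _).le
  have hPTnn : 0 ≤ P T := by
    apply intervalIntegral.integral_nonneg hT.le
    intro t ht
    exact mul_nonneg (hG2nn t ht) (Real.exp_pos _).le
  -- conclude
  have hXT : X T ^ 2 = F T * Real.exp (B T) := by
    simp only [hF, hE]
    rw [mul_assoc, ← Real.exp_add]
    simp
  have h2 : X T ^ 2 ≤ (X 0 ^ 2 + P T) * Real.exp (B T) := by
    rw [hXT]
    exact mul_le_mul_of_nonneg_right hFT (Real.exp_pos _).le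
  have hexple : Real.exp (B T) ≤ Real.exp (-(cstar / 4) * T) := Real.exp_le_exp.2 hBT
  have h3 : (X 0 ^ 2 + P T) * Real.exp (B T) ≤
      (γ + α * γ * Real.exp (cstar / 2 * T)) * Real.exp (-(cstar / 4) * T) := by
    apply mul_le_mul (by linarith) hexple (Real.exp_pos _).le
    nlinarith [Real.exp_pos (cstar / 2 * T)]
  have hexpmul : Real.exp (cstar / 2 * T) * Real.exp (-(cstar / 4) * T) =
      Real.exp (cstar / 4 * T) := by
    rw [← Real.exp_add]
    ring_nf
  have h4 : X T ^ 2 ≤ γ * Real.exp (-(cstar / 4) * T) + α * γ * Real.exp (cstar / 4 * T) := by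
    calc X T ^ 2 ≤ (γ + α * γ * Real.exp (cstar / 2 * T)) * Real.exp (-(cstar / 4) * T) :=
          h2.trans h3
      _ = γ * Real.exp (-(cstar / 4) * T) +
          α * γ * (Real.exp (cstar / 2 * T) * Real.exp (-(cstar / 4) * T)) := by ring
      _ = γ * Real.exp (-(cstar / 4) * T) + α * γ * Real.exp (cstar / 4 * T) := by
          rw [hexpmul]
  nlinarith [h4, hsmall, hγ.le]
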